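/- The map φ(z) = z e^{1−z} restricted to the closed unit disk is injective; in particular φ maps the region G_r = Int(Γ_r) conformally onto the open disk of radius e^{−r} centered at 0 (for 0 ≤ r < ∞). -/

import Mathlib

/-- For `x ≥ 0`, `sinh x ≤ x * cosh x`. -/
lemma aux_sinh_le_mul_cosh (x : ℝ) (hx : 0 ≤ x) : Real.sinh x ≤ x * Real.cosh x := by
  have hmono : MonotoneOn (fun t : ℝ => t * Real.cosh t - Real.sinh t) (Set.Ici 0) := by
    have hderiv : ∀ t : ℝ, HasDerivAt (fun t : ℝ => t * Real.cosh t - Real.sinh t)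
        (t * Real.sinh t) t := by
      intro t
      have h1 : HasDerivAt (fun t : ℝ => t * Real.cosh t - Real.sinh t)
          (1 * Real.cosh t + t * Real.sinh t - Real.cosh t) t :=
        ((hasDerivAt_id t).mul (Real.hasDerivAt_cosh t)).sub (Real.hasDerivAt_sinh t)
      convert h1 using 1
      ring
    apply monotoneOn_of_deriv_nonneg (convex_Ici 0)
    · exact (Continuous.sub (continuous_id.mul Real.continuous_cosh)
        Real.continuous_sinh).continuousOn
    · intro t ht
      exact (hderiv t).differentiableAt.differentiableWithinAt
    · intro t ht
      rw [(hderiv t).deriv]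
      have ht' : 0 < t := by simpa using ht
      exact mul_nonneg ht'.le (Real.sinh_nonneg_iff.mpr ht'.le)
  have h0 : (0 : ℝ) ∈ Set.Ici (0:ℝ) := Set.self_mem_Ici
  have := hmono h0 (Set.mem_Ici.mpr hx) hx
  simpa using this

/-- For all real `x`, `sinh² x · (1 − x²) ≤ x²`. -/
lemma aux_sinh_sq (x : ℝ) : Real.sinh x ^ 2 * (1 - x ^ 2) ≤ x ^ 2 := by
  rcases le_total 0 x with hx | hx
  · have h1 := aux_sinh_le_mul_cosh x hx
    have h2 : 0 ≤ Real.sinh x := Real.sinh_nonneg_iff.mpr hx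
    have h3 := Real.cosh_sq x
    nlinarith [sq_nonneg (Real.sinh x), sq_nonneg x, mul_self_nonneg (x * Real.cosh x)]
  · have h1 := aux_sinh_le_mul_cosh (-x) (neg_nonneg.2 hx)
    rw [Real.sinh_neg, Real.cosh_neg] at h1
    have h2 : 0 ≤ -Real.sinh x := by
      rw [← Real.sinh_neg]; exact Real.sinh_nonneg_iff.mpr (neg_nonneg.2 hx)
    have h3 := Real.cosh_sq x
    nlinarith [sq_nonneg (Real.sinh x), sq_nonneg x]

/-- The key real inequality. -/
lemma aux_key_ineq (x y : ℝ) (h1 : x ^ 2 + y ^ 2 ≤ 1) (h2 : x ≠ 0 ∨ y ≠ 0) :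
    (1 - (x ^ 2 + y ^ 2)) * (Real.sinh x ^ 2 + Real.sin y ^ 2)
      < (x ^ 2 + y ^ 2) * (Real.sinh x ^ 2 + Real.cos y ^ 2) := by
  have hcos : Real.cos y ^ 2 = 1 - Real.sin y ^ 2 := by
    have := Real.sin_sq_add_cos_sq y; linarith
  have hsin : Real.sin y ^ 2 ≤ y ^ 2 := Real.sin_sq_le_sq
  rcases eq_or_ne x 0 with rfl | hx
  · have hy : y ≠ 0 := h2.resolve_left (by simp)
    have hsin' : Real.sin y ^ 2 < y ^ 2 := Real.sin_sq_lt_sq hy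
    rw [hcos]
    simp only [Real.sinh_zero]
    nlinarith [sq_nonneg (Real.sin y), sq_nonneg y]
  · have hx2 : 0 < x ^ 2 := by positivity
    have hs : 0 < Real.sinh x ^ 2 := by
      have : Real.sinh x ≠ 0 := by
        intro h
        exact hx (Real.sinh_injective (by simpa using h))
      positivity
    rw [hcos]
    rcases le_or_gt (1/2 : ℝ) (x ^ 2 + y ^ 2) with ht | ht
    · nlinarith [mul_nonneg (by linarith : (0:ℝ) ≤ 2 * (x ^ 2 + y ^ 2) - 1) hs.le]
    · have haux := aux_sinh_sq x
      nlinarith [mul_nonneg (sq_nonneg y) hs.le, mul_pos hx2 hs]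

lemma aux_normSq_sinh (d : ℂ) :
    Complex.normSq (Complex.sinh d) = Real.sinh d.re ^ 2 + Real.sin d.im ^ 2 := by
  have hd : Complex.sinh d =
      (↑(Real.sinh d.re * Real.cos d.im) : ℂ) + (↑(Real.cosh d.re * Real.sin d.im) : ℂ) * Complex.I := by
    conv_lhs => rw [← Complex.re_add_im d]
    rw [Complex.sinh_add, Complex.sinh_mul_I, Complex.cosh_mul_I]
    push_cast
    ring
  rw [hd, Complex.normSq_add_mul_I]
  have h1 := Real.cosh_sq d.re
  have h2 := Real.sin_sq_add_cos_sq d.im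
  nlinarith [h1, h2]

lemma aux_normSq_cosh (d : ℂ) :
    Complex.normSq (Complex.cosh d) = Real.sinh d.re ^ 2 + Real.cos d.im ^ 2 := by
  have hd : Complex.cosh d =
      (↑(Real.cosh d.re * Real.cos d.im) : ℂ) + (↑(Real.sinh d.re * Real.sin d.im) : ℂ) * Complex.I := by
    conv_lhs => rw [← Complex.re_add_im d]
    rw [Complex.cosh_add, Complex.sinh_mul_I, Complex.cosh_mul_I]
    push_cast
    ring
  rw [hd, Complex.normSq_add_mul_I]
  have h1 := Real.cosh_sq d.re
  have h2 := Real.sin_sq_add_cos_sq d.im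
  nlinarith [h1, h2]

/-- Injectivity of `φ` on the closed unit disk. -/
lemma aux_phi_injOn :
    Set.InjOn (fun z : ℂ => z * Complex.exp (1 - z)) (Metric.closedBall (0 : ℂ) 1) := by
  intro a ha b hb h
  by_contra hne
  set m : ℂ := (a + b) / 2 with hm
  set d : ℂ := (a - b) / 2 with hdd
  have ha' : a = m + d := by rw [hm, hdd]; ring
  have hb' : b = m - d := by rw [hm, hdd]; ring
  have hd0 : d ≠ 0 := by
    rw [hdd]
    intro hcon
    apply hne
    have : a - b = 0 := by
      field_simp at hcon
      simpa using hcon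
    linear_combination this
  -- reduce to a * exp(-a) = b * exp(-b)
  have h' : a * Complex.exp (-a) = b * Complex.exp (-b) := by
    have e1 : ∀ z : ℂ, Complex.exp (1 - z) * Complex.exp (-1) = Complex.exp (-z) := by
      intro z; rw [← Complex.exp_add]; ring_nf
    have := congrArg (fun t => t * Complex.exp (-1)) h
    simpa only [mul_assoc, e1] using this
  -- key identity
  have key : d * Complex.cosh d = m * Complex.sinh d := by
    have e2 : Complex.exp (-(m + d)) = Complex.exp (-m) * Complex.exp (-d) := by
      rw [← Complex.exp_add]; ring_nf
    have e3 : Complex.exp (-(m - d)) = Complex.exp (-m) * Complex.exp d := by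
      rw [← Complex.exp_add]; ring_nf
    have expand : a * Complex.exp (-a) - b * Complex.exp (-b)
        = Complex.exp (-m) * (2 * (d * Complex.cosh d - m * Complex.sinh d)) := by
      have hc : Complex.cosh d = (Complex.exp d + Complex.exp (-d)) / 2 := rfl
      have hs : Complex.sinh d = (Complex.exp d - Complex.exp (-d)) / 2 := rfl
      rw [ha', hb', hc, hs, e2, e3]
      ring
    have hz : Complex.exp (-m) * (2 * (d * Complex.cosh d - m * Complex.sinh d)) = 0 := by
      rw [← expand, h', sub_self]
    have h2 : 2 * (d * Complex.cosh d - m * Complex.sinh d) = 0 :=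
      (mul_eq_zero.mp hz).resolve_left (Complex.exp_ne_zero _)
    linear_combination h2 / 2
  have habs : Complex.normSq d * Complex.normSq (Complex.cosh d)
      = Complex.normSq m * Complex.normSq (Complex.sinh d) := by
    rw [← Complex.normSq_mul, key, Complex.normSq_mul]
  -- norm constraints
  have hna : Complex.normSq a ≤ 1 := by
    have : ‖a‖ ≤ 1 := by
      simpa [Complex.dist_eq] using Metric.mem_closedBall.mp ha
    rw [← Complex.sq_norm]
    exact pow_le_one₀ (norm_nonneg a) this
  have hnb : Complex.normSq b ≤ 1 := by
    have : ‖b‖ ≤ 1 := by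
      simpa [Complex.dist_eq] using Metric.mem_closedBall.mp hb
    rw [← Complex.sq_norm]
    exact pow_le_one₀ (norm_nonneg b) this
  have hparid : Complex.normSq a + Complex.normSq b
      = 2 * Complex.normSq m + 2 * Complex.normSq d := by
    rw [ha', hb']
    simp only [Complex.normSq_apply, Complex.add_re, Complex.add_im, Complex.sub_re,
      Complex.sub_im]
    ring
  have hpar : Complex.normSq m + Complex.normSq d ≤ 1 := by linarith
  -- apply the key inequality
  have hnd : Complex.normSq d = d.re ^ 2 + d.im ^ 2 := by
    rw [Complex.normSq_apply]; ring
  have hnm : 0 ≤ Complex.normSq m := Complex.normSq_nonneg m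
  have hle : d.re ^ 2 + d.im ^ 2 ≤ 1 := by rw [← hnd]; linarith
  have hne2 : d.re ≠ 0 ∨ d.im ≠ 0 := by
    by_contra hcon
    push_neg at hcon
    exact hd0 (Complex.ext hcon.1 hcon.2)
  have K := aux_key_ineq d.re d.im hle hne2
  rw [← hnd] at K
  rw [← aux_normSq_sinh, ← aux_normSq_cosh] at K
  have hstep : Complex.normSq m * Complex.normSq (Complex.sinh d)
      ≤ (1 - Complex.normSq d) * Complex.normSq (Complex.sinh d) :=
    mul_le_mul_of_nonneg_right (by linarith) (Complex.normSq_nonneg _)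
  linarith [habs, hstep, K]

/-- Surjectivity onto the open unit disk. -/
lemma aux_phi_onto {w : ℂ} (hw : ‖w‖ < 1) :
    ∃ z : ℂ, ‖z‖ < 1 ∧ z * Complex.exp (1 - z) = w := by
  set f : ℂ → ℂ := fun z => z * Complex.exp (1 - z) with hf
  have hana : AnalyticOnNhd ℂ f Set.univ := fun z _ =>
    (analyticAt_id.mul ((analyticAt_const.sub analyticAt_id).cexp))
  have hopen : IsOpen (f '' Metric.ball 0 1) := by
    rcases hana.is_constant_or_isOpen isPreconnected_univ with ⟨c, hc⟩ | hopen'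
    · exfalso
      have h0 := hc 0 (Set.mem_univ _)
      have h1 := hc 1 (Set.mem_univ _)
      simp [hf] at h0 h1
      rw [← h0] at h1
      exact one_ne_zero h1
    · exact hopen' _ (Set.subset_univ _) Metric.isOpen_ball
  have hbd : ∀ z : ℂ, ‖z‖ = 1 → 1 ≤ ‖f z‖ := by
    intro z hz
    have h1 : ‖f z‖ = ‖z‖ * Real.exp (1 - z.re) := by
      rw [hf]
      simp only [norm_mul, Complex.norm_exp, Complex.sub_re, Complex.one_re]
    rw [h1, hz, one_mul]
    have h2 : z.re ≤ 1 := (Complex.re_le_norm z).trans hz.le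
    calc (1 : ℝ) = Real.exp 0 := Real.exp_zero.symm
      _ ≤ Real.exp (1 - z.re) := Real.exp_le_exp.mpr (by linarith)
  have hcl : Metric.ball (0 : ℂ) 1 ∩ closure (f '' Metric.ball 0 1) ⊆ f '' Metric.ball 0 1 := by
    rintro v ⟨hv1, hv2⟩
    have hK : IsCompact (f '' Metric.closedBall 0 1) := by
      apply (isCompact_closedBall _ _).image
      exact continuous_id.mul ((continuous_const.sub continuous_id).cexp)
    have hsub : closure (f '' Metric.ball 0 1) ⊆ f '' Metric.closedBall 0 1 :=
      closure_minimal (Set.image_mono Metric.ball_subset_closedBall) hK.isClosed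
    obtain ⟨z, hz, rfl⟩ := hsub hv2
    have hz1 : ‖z‖ ≤ 1 := by
      simpa [Complex.dist_eq] using Metric.mem_closedBall.mp hz
    rcases lt_or_eq_of_le hz1 with hlt | heq
    · exact ⟨z, by simpa [Complex.dist_eq] using hlt, rfl⟩
    · exfalso
      have := hbd z heq
      have hv1' : ‖f z‖ < 1 := by
        simpa [Complex.dist_eq] using Metric.mem_ball.mp hv1
      linarith
  have hball : Metric.ball (0 : ℂ) 1 ⊆ f '' Metric.ball 0 1 := by
    apply IsPreconnected.subset_left_of_subset_union hopen
      isClosed_closure.isOpen_compl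
      (disjoint_compl_right.mono_left subset_closure)
    · intro p hp
      by_cases hpc : p ∈ closure (f '' Metric.ball 0 1)
      · exact Or.inl (hcl ⟨hp, hpc⟩)
      · exact Or.inr hpc
    · refine ⟨0, Metric.mem_ball_self one_pos, ⟨0, Metric.mem_ball_self one_pos, by simp [hf]⟩⟩
    · exact (convex_ball (0 : ℂ) 1).isPreconnected
  have hwmem : w ∈ Metric.ball (0 : ℂ) 1 := by
    simpa [Complex.dist_eq] using hw
  obtain ⟨z, hz, hfz⟩ := hball hwmem
  exact ⟨z, by simpa [Complex.dist_eq] using Metric.mem_ball.mp hz, hfz⟩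

/-- `φ(z) = z e^{1−z}` is injective on the closed unit disk; in particular, for every
`0 ≤ r`, `φ` maps the interior region `G_r = { z : |z| < 1, |φ(z)| < e^{−r} }`
(conformally, `φ` being holomorphic and injective) onto the open disk `|w| < e^{−r}`. -/
theorem phi_injective_and_maps_onto_disk :
    Set.InjOn (fun z : ℂ => z * Complex.exp (1 - z)) (Metric.closedBall (0 : ℂ) 1) ∧
      ∀ r : ℝ, 0 ≤ r →
        (fun z : ℂ => z * Complex.exp (1 - z)) ''
            {z : ℂ | ‖z‖ < 1 ∧
              ‖z * Complex.exp (1 - z)‖ < Real.exp (-r)} =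
          Metric.ball (0 : ℂ) (Real.exp (-r)) := by
  constructor
  · exact aux_phi_injOn
  · intro r hr
    ext w
    constructor
    · rintro ⟨z, ⟨hz1, hz2⟩, rfl⟩
      simpa [Complex.dist_eq] using hz2
    · intro hwmem
      have hw1 : ‖w‖ < Real.exp (-r) := by
        simpa [Complex.dist_eq] using Metric.mem_ball.mp hwmem
      have hw2 : ‖w‖ < 1 :=
        lt_of_lt_of_le hw1 (Real.exp_le_one_iff.mpr (by linarith))
      obtain ⟨z, hz, hfz⟩ := aux_phi_onto hw2
      exact ⟨z, ⟨hz, by rw [hfz]; exact hw1⟩, hfz⟩
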